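/- Let Z = X·Y where X ∈ ℝ^{I×K} and Y ∈ ℝ^{K×J} are entrywise nonnegative, rank(X) = rank(Y) = K, X^T satisfies the SSC, and Y satisfies the SSC. Then for any entrywise nonnegative matrices X̂ ∈ ℝ^{I×K} and Ŷ ∈ ℝ^{K×J} with Z = X̂·Ŷ, there exist a permutation matrix Π ∈ ℝ^{K×K} and a diagonal matrix Σ ∈ ℝ^{K×K} with strictly positive diagonal entries such that X̂ = X·Π·Σ and Ŷ = Σ^{-1}·Π^T·Y. -/

import Mathlib

open Matrix BigOperators

/-- Euclidean norm of a real vector. -/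
noncomputable def l2norm {m : Type*} [Fintype m] (x : m → ℝ) : ℝ :=
  Real.sqrt (∑ i, (x i) ^ 2)

/-- `P` is a permutation matrix. -/
def IsPermMatrix {K : ℕ} (P : Matrix (Fin K) (Fin K) ℝ) : Prop :=
  ∃ σ : Equiv.Perm (Fin K), ∀ i j, P i j = if σ i = j then 1 else 0

/-- The conic hull of the columns of `H`. -/
def coneOf {K : ℕ} {J : Type*} [Fintype J] (H : Matrix (Fin K) J ℝ) : Set (Fin K → ℝ) :=
  {x | ∃ θ : J → ℝ, (∀ j, 0 ≤ θ j) ∧ x = H.mulVec θ}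

/-- The second-order cone `C = {x : √(K-1) ‖x‖₂ ≤ ∑ᵢ xᵢ}`. -/
def socC (K : ℕ) : Set (Fin K → ℝ) :=
  {x | Real.sqrt ((K : ℝ) - 1) * l2norm x ≤ ∑ i, x i}

/-- The sufficiently scattered condition. -/
def SSC {K : ℕ} {J : Type*} [Fintype J] (H : Matrix (Fin K) J ℝ) : Prop :=
  socC K ⊆ coneOf H ∧
  ∀ Q : Matrix (Fin K) (Fin K) ℝ, Qᵀ * Q = 1 → ¬ IsPermMatrix Q → ¬ (coneOf H ⊆ coneOf Q)

lemma l2norm_nonneg {m : Type*} [Fintype m] (x : m → ℝ) : 0 ≤ l2norm x :=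
  Real.sqrt_nonneg _

lemma l2norm_sq {m : Type*} [Fintype m] (x : m → ℝ) : l2norm x ^ 2 = ∑ i, (x i) ^ 2 := by
  rw [l2norm, Real.sq_sqrt]; positivity

set_option maxHeartbeats 1000000 in
/-- Any vector in the dual cone of `socC K` satisfies `‖v‖ ≤ ∑ v i`. -/
lemma mem_dual_soc {K : ℕ} (v : Fin K → ℝ)
    (h : ∀ x ∈ socC K, 0 ≤ ∑ i, v i * x i) : l2norm v ≤ ∑ i, v i := by
  rcases Nat.eq_zero_or_pos K with hK | hK
  · subst hK
    simp [l2norm]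
  have hK1real : (1:ℝ) ≤ K := by exact_mod_cast hK
  set s : ℝ := ∑ i, v i with hs
  have hones : (fun _ : Fin K => (1:ℝ)) ∈ socC K := by
    have h1 : l2norm (fun _ : Fin K => (1:ℝ)) = Real.sqrt K := by
      simp [l2norm]
    have h2 : Real.sqrt ((K:ℝ) - 1) ≤ Real.sqrt K :=
      Real.sqrt_le_sqrt (by linarith)
    have h3 : Real.sqrt ((K:ℝ)) * Real.sqrt K = K := Real.mul_self_sqrt (by positivity)
    simp only [socC, Set.mem_setOf_eq, h1, Finset.sum_const, Finset.card_univ,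
      Fintype.card_fin, nsmul_eq_mul, mul_one]
    calc Real.sqrt ((K:ℝ) - 1) * Real.sqrt K ≤ Real.sqrt K * Real.sqrt K :=
          mul_le_mul_of_nonneg_right h2 (Real.sqrt_nonneg _)
      _ = K := h3
  have hs0 : 0 ≤ s := by
    have := h _ hones
    simpa [hs] using this
  set w : Fin K → ℝ := fun i => (K:ℝ) * v i - s with hw
  have hKpos : (0:ℝ) < K := by exact_mod_cast hK
  have hsumw : ∑ i, w i = 0 := by
    simp only [hw]
    rw [Finset.sum_sub_distrib, ← Finset.mul_sum, ← hs]
    simp only [Finset.sum_const, Finset.card_univ, Fintype.card_fin, nsmul_eq_mul]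
    ring
  set N : ℝ := ∑ i, (w i) ^ 2 with hN
  have hN0 : 0 ≤ N := Finset.sum_nonneg fun i _ => sq_nonneg _
  have hvw : ∑ i, v i * w i = N / K := by
    have e1 : N = (K:ℝ) * (∑ i, v i * w i) - s * (∑ i, w i) := by
      rw [hN, Finset.mul_sum, Finset.mul_sum, ← Finset.sum_sub_distrib]
      refine Finset.sum_congr rfl fun i _ => ?_
      simp only [hw]; ring
    rw [hsumw, mul_zero, sub_zero] at e1
    rw [eq_div_iff (ne_of_gt hKpos)]
    linarith [e1]
  -- key inequality: N ≤ K (K-1) s²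
  have key : N ≤ (K:ℝ) * ((K:ℝ) - 1) * s ^ 2 := by
    rcases eq_or_lt_of_le hN0 with hN0' | hNpos
    · have hrhs : 0 ≤ (K:ℝ) * ((K:ℝ) - 1) * s ^ 2 :=
        mul_nonneg (mul_nonneg (by linarith) (by linarith)) (sq_nonneg s)
      linarith [hN0']
    · -- N > 0 forces K ≥ 2
      have hK2 : 2 ≤ K := by
        by_contra hcon
        push_neg at hcon
        have hK1 : K = 1 := by omega
        obtain ⟨a, hauniv⟩ := Finset.card_eq_one.mp
          (by simp [hK1] : (Finset.univ : Finset (Fin K)).card = 1)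
        have hw0 : w a = 0 := by rw [hauniv, Finset.sum_singleton] at hsumw; exact hsumw
        have hNz : N = 0 := by rw [hN, hauniv, Finset.sum_singleton, hw0]; ring
        linarith
      have hK2' : (2:ℝ) ≤ K := by exact_mod_cast hK2
      have hKm1 : (0:ℝ) < (K:ℝ) - 1 := by linarith
      set t : ℝ := Real.sqrt ((K:ℝ) / (((K:ℝ) - 1) * N)) with ht
      have htpos : 0 < t := Real.sqrt_pos.mpr (by positivity)
      have ht2 : t ^ 2 * (((K:ℝ) - 1) * N) = K := by
        rw [ht, Real.sq_sqrt (by positivity)]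
        field_simp
      set x : Fin K → ℝ := fun i => 1 - t * w i with hx
      have hsumx : ∑ i, x i = K := by
        simp only [hx]
        rw [Finset.sum_sub_distrib, ← Finset.mul_sum, hsumw, mul_zero, sub_zero]
        simp [Finset.sum_const, Finset.card_univ]
      have hsumx2 : ∑ i, (x i) ^ 2 = (K:ℝ) + t ^ 2 * N := by
        have e : ∑ i, (x i)^2 = ∑ i, (1 - 2 * t * w i + t ^ 2 * (w i) ^ 2) := by
          refine Finset.sum_congr rfl fun i _ => ?_
          simp only [hx]; ring
        rw [e, Finset.sum_add_distrib, Finset.sum_sub_distrib, ← Finset.mul_sum,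
          ← Finset.mul_sum, hsumw, hN]
        simp [Finset.sum_const, Finset.card_univ]
      have hxmem : x ∈ socC K := by
        simp only [socC, Set.mem_setOf_eq, hsumx]
        have hl2 : l2norm x = Real.sqrt ((K:ℝ) + t ^ 2 * N) := by
          rw [l2norm, hsumx2]
        rw [hl2, ← Real.sqrt_mul (le_of_lt hKm1)]
        have hQ : ((K:ℝ) - 1) * (t ^ 2 * N) = K := by nlinarith [ht2]
        have harg : ((K:ℝ) - 1) * ((K:ℝ) + t ^ 2 * N) = (K:ℝ) ^ 2 := by nlinarith [hQ]
        rw [harg, Real.sqrt_sq (le_of_lt hKpos)]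
      have hvx := h x hxmem
      have hvx' : ∑ i, v i * x i = s - t * (N / K) := by
        have e : ∑ i, v i * x i = ∑ i, (v i - t * (v i * w i)) := by
          refine Finset.sum_congr rfl fun i _ => ?_
          simp only [hx]; ring
        rw [e, Finset.sum_sub_distrib, ← Finset.mul_sum, hvw, ← hs]
      rw [hvx'] at hvx
      have htN : t * N ≤ (K:ℝ) * s := by
        have h5 : t * (N / K) ≤ s := by linarith
        calc t * N = (t * (N / K)) * K := by field_simp
          _ ≤ s * K := mul_le_mul_of_nonneg_right h5 (le_of_lt hKpos)
          _ = (K:ℝ) * s := by ring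
      have htN2 : (t * N) ^ 2 ≤ ((K:ℝ) * s) ^ 2 := by
        apply sq_le_sq' _ htN
        nlinarith [mul_nonneg (le_of_lt htpos) hN0, mul_nonneg (le_of_lt hKpos) hs0]
      have e2 : (t * N) ^ 2 * ((K:ℝ) - 1) = (K:ℝ) * N := by
        have e3 : (t * N)^2 * ((K:ℝ)-1) = (t^2 * (((K:ℝ)-1) * N)) * N := by ring
        rw [e3, ht2]
      nlinarith [htN2, hKm1, hKpos]
  have hsum2 : ∑ i, (v i) ^ 2 ≤ s ^ 2 := by
    have e4 : ∑ i, (w i)^2 = ∑ i, ((K:ℝ)^2 * (v i)^2 - 2 * (K:ℝ) * s * v i + s^2) := by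
      refine Finset.sum_congr rfl fun i _ => ?_
      simp only [hw]; ring
    have e5 : ∑ i, (2*(K:ℝ)*s) * v i = 2*(K:ℝ)*s*s := by
      rw [← Finset.mul_sum, ← hs]
    have e6 : ∑ _i : Fin K, s^2 = (K:ℝ) * s^2 := by
      simp [Finset.sum_const, Finset.card_univ, nsmul_eq_mul]
    have e : (K:ℝ)^2 * (∑ i, (v i)^2) = N + (K:ℝ) * s^2 := by
      rw [hN, e4, Finset.sum_add_distrib, Finset.sum_sub_distrib, ← Finset.mul_sum, e5, e6]
      ring
    nlinarith [key, e, mul_pos hKpos hKpos]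
  rw [l2norm]
  calc Real.sqrt (∑ i, (v i)^2) ≤ Real.sqrt (s^2) := Real.sqrt_le_sqrt hsum2
    _ = |s| := Real.sqrt_sq_eq_abs s
    _ = s := abs_of_nonneg hs0

/-- Cauchy–Schwarz equality case. -/
lemma cs_eq {K : ℕ} (u v : Fin K → ℝ) (huv : ∑ i, u i * v i = 1)
    (hn : l2norm u * l2norm v ≤ 1) : ∃ c : ℝ, 0 < c ∧ ∀ i, v i = c * u i := by
  set a := l2norm u with ha
  set b := l2norm v with hb
  have ha0 : 0 ≤ a := l2norm_nonneg u
  have hb0 : 0 ≤ b := l2norm_nonneg v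
  have hcs : (∑ i, u i * v i) ^ 2 ≤ (∑ i, (u i)^2) * (∑ i, (v i)^2) :=
    Finset.sum_mul_sq_le_sq_mul_sq _ _ _
  have hab1 : a * b = 1 := by
    have h1 : 1 ≤ (a * b) ^ 2 := by
      rw [mul_pow, ha, hb, l2norm_sq, l2norm_sq]
      rw [huv] at hcs; simpa using hcs
    nlinarith [mul_nonneg ha0 hb0]
  have hapos : 0 < a := by
    rcases lt_or_eq_of_le ha0 with h | h; · exact h
    exfalso; rw [← h] at hab1; simp at hab1
  have hbpos : 0 < b := by
    rcases lt_or_eq_of_le hb0 with h | h; · exact h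
    exfalso; rw [← h] at hab1; simp at hab1
  have hzero : ∑ i, (a * v i - b * u i) ^ 2 = 0 := by
    have expand : ∑ i, (a * v i - b * u i) ^ 2
        = a^2 * (∑ i, (v i)^2) - 2*a*b*(∑ i, u i * v i) + b^2 * (∑ i, (u i)^2) := by
      rw [Finset.mul_sum, Finset.mul_sum, Finset.mul_sum]
      rw [← Finset.sum_sub_distrib, ← Finset.sum_add_distrib]
      exact Finset.sum_congr rfl fun i _ => by ring
    rw [expand, huv]
    have e1 : ∑ i, (v i)^2 = b^2 := by rw [hb, l2norm_sq]
    have e2 : ∑ i, (u i)^2 = a^2 := by rw [ha, l2norm_sq]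
    rw [e1, e2]
    nlinarith [hab1]
  have heach : ∀ i, a * v i - b * u i = 0 := by
    intro i
    have h6 := (Finset.sum_eq_zero_iff_of_nonneg
      (fun i _ => sq_nonneg (a * v i - b * u i))).mp hzero i (Finset.mem_univ i)
    exact pow_eq_zero_iff (by norm_num) |>.mp h6
  refine ⟨b / a, div_pos hbpos hapos, fun i => ?_⟩
  have h7 := heach i
  field_simp
  linarith [h7]

section helpers
variable {I K J n : ℕ}

lemma matrix_eq_of_mulVec_eq {m n : ℕ} {M N : Matrix (Fin m) (Fin n) ℝ}
    (h : ∀ v, M *ᵥ v = N *ᵥ v) : M = N := by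
  ext i j
  have h1 := congrFun (h (Pi.single j 1)) i
  simpa [Matrix.mulVec_single] using h1

lemma left_cancel {X : Matrix (Fin I) (Fin K) ℝ}
    (hinj : Function.Injective X.mulVecLin) {M N : Matrix (Fin K) (Fin n) ℝ}
    (h : X * M = X * N) : M = N := by
  apply matrix_eq_of_mulVec_eq
  intro v
  apply hinj
  show X *ᵥ (M *ᵥ v) = X *ᵥ (N *ᵥ v)
  rw [Matrix.mulVec_mulVec, Matrix.mulVec_mulVec, h]

lemma right_cancel {Y : Matrix (Fin K) (Fin J) ℝ}
    (hsurj : Function.Surjective Y.mulVecLin) {M N : Matrix (Fin n) (Fin K) ℝ}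
    (h : M * Y = N * Y) : M = N := by
  apply matrix_eq_of_mulVec_eq
  intro v
  obtain ⟨w, hw⟩ := hsurj v
  have hw' : Y *ᵥ w = v := hw
  rw [← hw', Matrix.mulVec_mulVec, Matrix.mulVec_mulVec, h]

lemma inj_of_rank {X : Matrix (Fin I) (Fin K) ℝ} (h : X.rank = K) :
    Function.Injective X.mulVecLin := by
  rw [← LinearMap.ker_eq_bot]
  have h2 := LinearMap.finrank_range_add_finrank_ker X.mulVecLin
  rw [show Module.finrank ℝ (Fin K → ℝ) = K from Module.finrank_fin_fun ℝ] at h2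
  have h3 : Module.finrank ℝ (LinearMap.range X.mulVecLin) = K := h
  rw [h3] at h2
  have h4 : Module.finrank ℝ (LinearMap.ker X.mulVecLin) = 0 := by omega
  exact Submodule.finrank_eq_zero.mp h4

lemma surj_of_rank {Y : Matrix (Fin K) (Fin J) ℝ} (h : Y.rank = K) :
    Function.Surjective Y.mulVecLin := by
  rw [← LinearMap.range_eq_top]
  apply Submodule.eq_top_of_finrank_eq
  rw [show Module.finrank ℝ (Fin K → ℝ) = K from Module.finrank_fin_fun ℝ]
  exact h

lemma exists_right_factor {X : Matrix (Fin I) (Fin K) ℝ} {M : Matrix (Fin I) (Fin n) ℝ}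
    (h : ∀ v : Fin n → ℝ, M *ᵥ v ∈ LinearMap.range X.mulVecLin) :
    ∃ A : Matrix (Fin K) (Fin n) ℝ, X * A = M := by
  choose θ hθ using fun j => h (Pi.single j 1)
  refine ⟨Matrix.of fun k j => θ j k, ?_⟩
  ext i j
  have h1 : X *ᵥ θ j = M *ᵥ Pi.single j 1 := hθ j
  have h2 := congrFun h1 i
  rw [Matrix.mul_apply]
  calc ∑ k, X i k * θ j k = (X *ᵥ θ j) i := rfl
    _ = (M *ᵥ Pi.single j 1) i := h2
    _ = M i j := by simp [Matrix.mulVec_single]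

/-- From `Z = X * Y` with full-rank factors and `Z = M * N'`, the range of `M` equals that
of `X`, yielding a right factor. -/
lemma range_eq_of_factor {X : Matrix (Fin I) (Fin K) ℝ} {Y : Matrix (Fin K) (Fin J) ℝ}
    (hXrank : X.rank = K) (hYsurj : Function.Surjective Y.mulVecLin)
    {M : Matrix (Fin I) (Fin K) ℝ} {N' : Matrix (Fin K) (Fin J) ℝ}
    (heq : X * Y = M * N') :
    LinearMap.range M.mulVecLin = LinearMap.range X.mulVecLin := by
  have hZX : LinearMap.range (X * Y).mulVecLin = LinearMap.range X.mulVecLin := by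
    rw [Matrix.mulVecLin_mul, LinearMap.range_comp, LinearMap.range_eq_top.mpr hYsurj,
      Submodule.map_top]
  have hle : LinearMap.range X.mulVecLin ≤ LinearMap.range M.mulVecLin := by
    rw [← hZX, heq, Matrix.mulVecLin_mul]
    exact LinearMap.range_comp_le_range _ _
  symm
  apply Submodule.eq_of_le_of_finrank_le hle
  have h1 : Module.finrank ℝ (LinearMap.range M.mulVecLin) ≤ K := by
    have := Matrix.rank_le_card_width M
    rw [Fintype.card_fin] at this; exact this
  have h2 : Module.finrank ℝ (LinearMap.range X.mulVecLin) = K := hXrank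
  omega

end helpers

set_option maxHeartbeats 1600000 in
theorem stmt5 {I J K : ℕ}
    (X : Matrix (Fin I) (Fin K) ℝ) (Y : Matrix (Fin K) (Fin J) ℝ)
    (hX0 : ∀ i k, 0 ≤ X i k) (hY0 : ∀ k j, 0 ≤ Y k j)
    (hXrank : X.rank = K) (hYrank : Y.rank = K)
    (hXssc : SSC Xᵀ) (hYssc : SSC Y)
    (Xh : Matrix (Fin I) (Fin K) ℝ) (Yh : Matrix (Fin K) (Fin J) ℝ)
    (hXh0 : ∀ i k, 0 ≤ Xh i k) (hYh0 : ∀ k j, 0 ≤ Yh k j)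
    (heq : X * Y = Xh * Yh) :
    ∃ (Pm : Matrix (Fin K) (Fin K) ℝ) (d : Fin K → ℝ),
      IsPermMatrix Pm ∧ (∀ i, 0 < d i) ∧
      Xh = X * Pm * Matrix.diagonal d ∧
      Yh = Matrix.diagonal (fun i => (d i)⁻¹) * Pmᵀ * Y := by
  classical
  have hXinj : Function.Injective X.mulVecLin := inj_of_rank hXrank
  have hYsurj : Function.Surjective Y.mulVecLin := surj_of_rank hYrank
  have hXtsurj : Function.Surjective Xᵀ.mulVecLin :=
    surj_of_rank (by rw [Matrix.rank_transpose]; exact hXrank)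
  have hYtrank : Yᵀ.rank = K := by rw [Matrix.rank_transpose]; exact hYrank
  -- X-side factor
  have hXhX : LinearMap.range Xh.mulVecLin = LinearMap.range X.mulVecLin :=
    range_eq_of_factor hXrank hYsurj heq
  obtain ⟨A, hXA⟩ : ∃ A : Matrix (Fin K) (Fin K) ℝ, X * A = Xh := by
    apply exists_right_factor
    intro v
    rw [← hXhX]
    exact ⟨v, rfl⟩
  -- Y-side factor (via transposes)
  have heqT : Yᵀ * Xᵀ = Yhᵀ * Xhᵀ := by
    rw [← Matrix.transpose_mul, ← Matrix.transpose_mul, heq]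
  have hYhY : LinearMap.range Yhᵀ.mulVecLin = LinearMap.range Yᵀ.mulVecLin :=
    range_eq_of_factor hYtrank hXtsurj heqT
  obtain ⟨C, hYC⟩ : ∃ C : Matrix (Fin K) (Fin K) ℝ, Yᵀ * C = Yhᵀ := by
    apply exists_right_factor
    intro v
    rw [← hYhY]
    exact ⟨v, rfl⟩
  set B : Matrix (Fin K) (Fin K) ℝ := Cᵀ with hBdef
  have hBY : B * Y = Yh := by
    rw [hBdef, ← Matrix.transpose_transpose Y, ← Matrix.transpose_mul, hYC,
      Matrix.transpose_transpose]
  -- A * B = 1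
  have hAB : A * B = 1 := by
    have h1 : X * (A * B * Y) = X * Y := by
      rw [Matrix.mul_assoc A B Y, hBY, ← Matrix.mul_assoc X A Yh, hXA, ← heq]
    have h2 : A * B * Y = Y := left_cancel hXinj h1
    have h3 : A * B * Y = (1 : Matrix (Fin K) (Fin K) ℝ) * Y := by
      rw [h2, Matrix.one_mul]
    exact right_cancel hYsurj h3
  have hBA : B * A = 1 := mul_eq_one_comm.mp hAB
  -- rows of B are in the dual of socC
  have hBdual : ∀ i, l2norm (fun j => B i j) ≤ ∑ j, B i j := by
    intro i
    apply mem_dual_soc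
    intro x hx
    obtain ⟨θ, hθ, rfl⟩ := hYssc.1 hx
    have e : ∑ j, B i j * (Y *ᵥ θ) j = ((B * Y) *ᵥ θ) i := by
      rw [← Matrix.mulVec_mulVec]; rfl
    rw [e, hBY, show (Yh *ᵥ θ) i = ∑ j, Yh i j * θ j from rfl]
    exact Finset.sum_nonneg fun j _ => mul_nonneg (hYh0 i j) (hθ j)
  -- columns of A are in the dual of socC
  have hAdual : ∀ i, l2norm (fun j => A j i) ≤ ∑ j, A j i := by
    intro i
    apply mem_dual_soc
    intro x hx
    obtain ⟨θ, hθ, rfl⟩ := hXssc.1 hx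
    have e : ∑ j, A j i * (Xᵀ *ᵥ θ) j = ((Aᵀ * Xᵀ) *ᵥ θ) i := by
      rw [← Matrix.mulVec_mulVec]; rfl
    rw [e, ← Matrix.transpose_mul, hXA,
      show (Xhᵀ *ᵥ θ) i = ∑ j, Xh j i * θ j from rfl]
    exact Finset.sum_nonneg fun j _ => mul_nonneg (hXh0 j i) (hθ j)
  -- diagonal dot products equal 1
  have hdot : ∀ i, ∑ j, B i j * A j i = 1 := by
    intro i
    have h1 : (B * A) i i = (1 : Matrix (Fin K) (Fin K) ℝ) i i := by rw [hBA]
    rw [Matrix.mul_apply] at h1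
    rw [h1, Matrix.one_apply_eq]
  -- sum of products of row/column sums equals K
  have hsumK : ∑ i, (∑ j, B i j) * (∑ j, A j i) = (K : ℝ) := by
    have e1 : ∀ i, (∑ j, B i j) * (∑ l, A l i) = ∑ j, ∑ l, B i j * A l i := by
      intro i; rw [Finset.sum_mul_sum]
    rw [Finset.sum_congr rfl fun i _ => e1 i]
    rw [Finset.sum_comm]
    have e2 : ∀ j, ∑ i, ∑ l, B i j * A l i = ∑ l, (A * B) l j := by
      intro j
      rw [Finset.sum_comm]
      refine Finset.sum_congr rfl fun l _ => ?_
      rw [Matrix.mul_apply]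
      exact Finset.sum_congr rfl fun i _ => mul_comm _ _
    rw [Finset.sum_congr rfl fun j _ => e2 j]
    rw [hAB]
    simp [Matrix.one_apply]
  -- each product of sums is at least 1
  have hl2 : ∀ i, 1 ≤ l2norm (fun j => B i j) * l2norm (fun j => A j i) := by
    intro i
    have hcs := Finset.sum_mul_sq_le_sq_mul_sq Finset.univ (fun j => B i j) (fun j => A j i)
    rw [hdot i] at hcs
    have hsq : 1 ≤ (l2norm (fun j => B i j) * l2norm (fun j => A j i)) ^ 2 := by
      rw [mul_pow, l2norm_sq, l2norm_sq]
      simpa using hcs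
    nlinarith [hsq, l2norm_nonneg (fun j => B i j), l2norm_nonneg (fun j => A j i),
      mul_nonneg (l2norm_nonneg (fun j => B i j)) (l2norm_nonneg (fun j => A j i))]
  have hge1 : ∀ i ∈ Finset.univ, (1:ℝ) ≤ (∑ j, B i j) * (∑ j, A j i) := by
    intro i _
    have h1 := hBdual i
    have h2 := hAdual i
    have h3 := l2norm_nonneg (fun j => B i j)
    have h4 := l2norm_nonneg (fun j => A j i)
    nlinarith [hl2 i]
  have heach : ∀ i, (∑ j, B i j) * (∑ j, A j i) = 1 := by
    have hsum1 : ∑ _i : Fin K, (1:ℝ) = (K:ℝ) := by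
      simp
    have := (Finset.sum_eq_sum_iff_of_le hge1).mp (by rw [hsum1, hsumK])
    intro i
    exact (this i (Finset.mem_univ i)).symm
  -- Cauchy-Schwarz equality: columns of A proportional to rows of B
  have hprop : ∀ i, ∃ c : ℝ, 0 < c ∧ ∀ j, A j i = c * B i j := by
    intro i
    have hle1 : l2norm (fun j => B i j) * l2norm (fun j => A j i) ≤ 1 := by
      have h1 := hBdual i
      have h2 := hAdual i
      have h3 := l2norm_nonneg (fun j => B i j)
      have h4 := l2norm_nonneg (fun j => A j i)
      nlinarith [heach i]
    exact cs_eq (fun j => B i j) (fun j => A j i) (hdot i) hle1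
  choose c hcpos hcAB using hprop
  -- A^T = diag c * B, hence A^T A = diag c
  have hAt : Aᵀ = Matrix.diagonal c * B := by
    ext i j
    rw [Matrix.transpose_apply, Matrix.diagonal_mul]
    exact hcAB i j
  have hAtA : Aᵀ * A = Matrix.diagonal c := by
    rw [hAt, Matrix.mul_assoc, hBA, Matrix.mul_one]
  set d : Fin K → ℝ := fun i => Real.sqrt (c i) with hddef
  have hdpos : ∀ i, 0 < d i := fun i => Real.sqrt_pos.mpr (hcpos i)
  have hdd : ∀ i, d i * d i = c i := fun i => Real.mul_self_sqrt (le_of_lt (hcpos i))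
  have hdiag1 : ∀ f : Fin K → ℝ, (∀ i, f i = 1) → Matrix.diagonal f = 1 := by
    intro f hf
    ext i j
    rcases eq_or_ne i j with rfl | hne
    · rw [Matrix.diagonal_apply_eq, Matrix.one_apply_eq, hf]
    · rw [Matrix.diagonal_apply_ne _ hne, Matrix.one_apply_ne hne]
  set Q : Matrix (Fin K) (Fin K) ℝ := A * Matrix.diagonal (fun i => (d i)⁻¹) with hQdef
  have hQA : Q * Matrix.diagonal d = A := by
    rw [hQdef, Matrix.mul_assoc, Matrix.diagonal_mul_diagonal]
    rw [hdiag1 _ (fun i => inv_mul_cancel₀ (ne_of_gt (hdpos i))), Matrix.mul_one]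
  have hQt : Qᵀ = Matrix.diagonal (fun i => (d i)⁻¹) * Aᵀ := by
    rw [hQdef, Matrix.transpose_mul, Matrix.diagonal_transpose]
  have hQorth : Qᵀ * Q = 1 := by
    rw [hQt, hQdef, Matrix.mul_assoc, ← Matrix.mul_assoc Aᵀ A, hAtA,
      Matrix.diagonal_mul_diagonal, Matrix.diagonal_mul_diagonal]
    apply hdiag1
    intro i
    have hne : d i ≠ 0 := ne_of_gt (hdpos i)
    rw [← hdd i]
    field_simp
  -- cone(Y) ⊆ cone(Q)
  have hsubset : coneOf Y ⊆ coneOf Q := by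
    rintro x ⟨θ, hθ, rfl⟩
    have hYhθ : ∀ i, 0 ≤ (Yh *ᵥ θ) i := by
      intro i
      rw [show (Yh *ᵥ θ) i = ∑ j, Yh i j * θ j from rfl]
      exact Finset.sum_nonneg fun j _ => mul_nonneg (hYh0 i j) (hθ j)
    refine ⟨fun i => d i * ((Yh *ᵥ θ) i), fun i => mul_nonneg (le_of_lt (hdpos i))
      (hYhθ i), ?_⟩
    have e1 : (fun i => d i * ((Yh *ᵥ θ) i)) = Matrix.diagonal d *ᵥ (Yh *ᵥ θ) := by
      funext i
      rw [Matrix.mulVec_diagonal]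
    rw [e1, Matrix.mulVec_mulVec, Matrix.mulVec_mulVec, hQA, ← hBY,
      ← Matrix.mul_assoc, hAB, Matrix.one_mul]
  have hQperm : IsPermMatrix Q := by
    by_contra hnp
    exact hYssc.2 Q hQorth hnp hsubset
  refine ⟨Q, d, hQperm, hdpos, ?_, ?_⟩
  · rw [Matrix.mul_assoc, hQA, hXA]
  · have hDQ : Matrix.diagonal (fun i => (d i)⁻¹) * Qᵀ = B := by
      rw [hQt, hAt, ← Matrix.mul_assoc, Matrix.diagonal_mul_diagonal,
        ← Matrix.mul_assoc, Matrix.diagonal_mul_diagonal]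
      rw [hdiag1 _ (fun i => by
        have hne : d i ≠ 0 := ne_of_gt (hdpos i)
        rw [← hdd i]
        field_simp), Matrix.one_mul]
    rw [hDQ, hBY]
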